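/- Let Γ be a simple connected graph of order n ≥ 2 with maximum degree Δ, and let μ be the algebraic connectivity of Γ (the second smallest eigenvalue of the Laplacian matrix of Γ). Then every strong defensive alliance S in Γ satisfies |S| ≥ ⌈n(μ − ⌊Δ/2⌋)/μ⌉; in particular the strong defensive alliance number satisfies â(Γ) ≥ ⌈n(μ − ⌊Δ/2⌋)/μ⌉. -/

import Mathlib

open Finset SimpleGraph Matrix

/-- `μ` is the second smallest (counted with multiplicity) value of the family `e`. -/
def IsSecondSmallest {ι : Type*} (e : ι → ℝ) (μ : ℝ) : Prop :=
  ∃ i₀ i₁ : ι, i₀ ≠ i₁ ∧ e i₀ ≤ μ ∧ e i₁ = μ ∧ ∀ j : ι, j ≠ i₀ → μ ≤ e j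

/-- `lam` is the largest value of the family `e`. -/
def IsLargest {ι : Type*} (e : ι → ℝ) (lam : ℝ) : Prop :=
  (∃ i : ι, e i = lam) ∧ ∀ i : ι, e i ≤ lam

section Rayleigh

open Matrix

local notation "⟪" x ", " y "⟫" => @inner ℝ _ _ x y

variable {m : Type*} [Fintype m] [DecidableEq m]

private lemma inner_eq_dot' (u v : EuclideanSpace ℝ m) :
    ⟪u, v⟫ = (u : m → ℝ) ⬝ᵥ (v : m → ℝ) := by
  simp [PiLp.inner_apply, dotProduct, RCLike.inner_apply, conj_trivial]
  exact Finset.sum_congr rfl fun _ _ => mul_comm _ _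

private lemma eig_dot' (A : Matrix m m ℝ) (hA : A.IsHermitian) (j : m) (y : m → ℝ) :
    ⇑(hA.eigenvectorBasis j) ⬝ᵥ (A *ᵥ y) =
      hA.eigenvalues j * (⇑(hA.eigenvectorBasis j) ⬝ᵥ y) := by
  have hAt : Aᵀ = A := by
    have := hA.eq
    rwa [conjTranspose_eq_transpose_of_trivial] at this
  rw [dotProduct_mulVec, ← mulVec_transpose, hAt, hA.mulVec_eigenvectorBasis,
    smul_dotProduct, smul_eq_mul]

private lemma rayleigh' (A : Matrix m m ℝ) (hA : A.IsHermitian) (μ : ℝ) (i₀ : m)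
    (hge : ∀ j, j ≠ i₀ → μ ≤ hA.eigenvalues j)
    (x : EuclideanSpace ℝ m) (hx : ⟪hA.eigenvectorBasis i₀, x⟫ = 0) :
    μ * ⟪x, x⟫ ≤ (x : m → ℝ) ⬝ᵥ (A *ᵥ (x : m → ℝ)) := by
  set b := hA.eigenvectorBasis with hb
  set e := hA.eigenvalues with he
  have hxx : ⟪x, x⟫ = ∑ j, ⟪b j, x⟫ ^ 2 := by
    rw [← b.sum_inner_mul_inner x x]
    refine Finset.sum_congr rfl fun j _ => ?_
    rw [real_inner_comm x (b j)]; ring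
  have hq : (x : m → ℝ) ⬝ᵥ (A *ᵥ (x : m → ℝ)) = ∑ j, e j * ⟪b j, x⟫ ^ 2 := by
    have h1 : (x : m → ℝ) ⬝ᵥ (A *ᵥ (x : m → ℝ))
        = ⟪x, (WithLp.toLp 2 (A *ᵥ (x : m → ℝ)) : EuclideanSpace ℝ m)⟫ := (inner_eq_dot' x (WithLp.toLp 2 (A *ᵥ (x : m → ℝ)))).symm
    rw [h1, ← b.sum_inner_mul_inner]
    refine Finset.sum_congr rfl fun j _ => ?_
    have h2 : ⟪b j, (WithLp.toLp 2 (A *ᵥ (x : m → ℝ)) : EuclideanSpace ℝ m)⟫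
        = e j * ⟪b j, x⟫ := by
      rw [inner_eq_dot', inner_eq_dot']
      exact eig_dot' A hA j x
    rw [h2, real_inner_comm x (b j)]; ring
  rw [hxx, hq, Finset.mul_sum]
  refine Finset.sum_le_sum fun j _ => ?_
  by_cases hj : j = i₀
  · subst hj
    rw [hx]; simp
  · nlinarith [hge j hj, sq_nonneg ⟪b j, x⟫]

end Rayleigh

theorem stmt_2 {V : Type*} [Fintype V] [DecidableEq V]
    (G : SimpleGraph V) [DecidableRel G.Adj]
    (n : ℕ) (hn : Fintype.card V = n)
    (hn2 : 2 ≤ n)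
    (hconn : G.Connected)
    (D : ℕ) (hD : G.maxDegree = D)
    (mu : ℝ)
    (hmu : ∃ hL : (G.lapMatrix ℝ).IsHermitian, IsSecondSmallest hL.eigenvalues mu)
    (S : Finset V) (hS : S.Nonempty)
    (hdef : ∀ v ∈ S, (G.neighborFinset v \ S).card ≤ (G.neighborFinset v ∩ S).card)
    :
    ⌈(n : ℝ) * (mu - ((D / 2 : ℕ) : ℝ)) / mu⌉ ≤ (S.card : ℤ) := by
  obtain ⟨hL, i₀, i₁, hne01, h0, h1, hge⟩ := hmu
  have hmu0 : 0 ≤ mu := by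
    rw [← h1]
    exact (SimpleGraph.posSemidef_lapMatrix ℝ G).eigenvalues_nonneg i₁
  rw [Int.ceil_le]
  push_cast
  rcases eq_or_lt_of_le hmu0 with hmuz | hmupos
  · rw [← hmuz, div_zero]
    positivity
  -- main case: 0 < mu
  · have hcardV : Fintype.card V = n := hn
    have hsle : S.card ≤ n := hn ▸ Finset.card_le_univ S
    have hs1 : 1 ≤ S.card := hS.card_pos
    set s : ℝ := (S.card : ℝ) with hsdef
    set f : ℝ := ((D / 2 : ℕ) : ℝ) with hfdef
    have hf0 : 0 ≤ f := by positivity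
    have hspos : (0:ℝ) < s := by rw [hsdef]; exact_mod_cast hS.card_pos
    have hnpos : (0:ℝ) < (n:ℝ) := by positivity
    rw [div_le_iff₀ hmupos]
    -- suffices : mu * (n - s) ≤ n * f
    suffices hkey : mu * ((n:ℝ) - s) ≤ (n:ℝ) * f by nlinarith
    -- set up the test vector
    set A := G.lapMatrix ℝ with hA
    set b := hL.eigenvectorBasis with hbdef
    set x : EuclideanSpace ℝ V := WithLp.toLp 2 (fun v => if v ∈ S then ((n:ℝ) - s) else -s) with hx
    set one : EuclideanSpace ℝ V := WithLp.toLp 2 (fun _ => (1:ℝ)) with hone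
    have honeA : A *ᵥ (one : V → ℝ) = 0 := G.lapMatrix_mulVec_const_eq_zero
    -- eigen-expansion coefficients of `one` vanish off i₀
    have hd : ∀ j, j ≠ i₀ → @inner ℝ _ _ (b j) one = 0 := by
      intro j hj
      have h := eig_dot' A hL j (one : V → ℝ)
      rw [honeA, dotProduct_zero] at h
      have hej : 0 < hL.eigenvalues j := lt_of_lt_of_le hmupos (hge j hj)
      rw [inner_eq_dot']
      have := h.symm
      rcases mul_eq_zero.mp this with h' | h'
      · exact absurd h' (ne_of_gt hej)
      · exact h'
    -- inner products with `one`
    have hone_inner : ∀ y : EuclideanSpace ℝ V, @inner ℝ _ _ one y = ∑ v, y v := by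
      intro y
      rw [inner_eq_dot']
      simp [dotProduct, hone]
    have honeone : @inner ℝ _ _ one one = (n:ℝ) := by
      rw [hone_inner]
      simp [hone, hcardV]
    have hox : @inner ℝ _ _ one x = 0 := by
      rw [hone_inner]
      rw [← Finset.sum_add_sum_compl S]
      have hA1 : ∑ v ∈ S, x v = s * ((n:ℝ) - s) := by
        rw [Finset.sum_congr rfl (fun v hv => if_pos hv), Finset.sum_const, nsmul_eq_mul]
      have hA2 : ∑ v ∈ Sᶜ, x v = ((n:ℝ) - s) * (-s) := by
        rw [Finset.sum_congr rfl (fun v hv => if_neg (Finset.mem_compl.mp hv)),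
          Finset.sum_const, nsmul_eq_mul, Finset.card_compl, hcardV]
        rw [Nat.cast_sub hsle]
      rw [hA1, hA2]; ring
    -- `one` is proportional to `b i₀`, hence x ⟂ b i₀
    have hbi₀ : @inner ℝ _ _ (b i₀) x = 0 := by
      have hexp : ∀ y : EuclideanSpace ℝ V,
          @inner ℝ _ _ one y = @inner ℝ _ _ one (b i₀) * @inner ℝ _ _ (b i₀) y := by
        intro y
        calc @inner ℝ _ _ one y
            = ∑ j, @inner ℝ _ _ one (b j) * @inner ℝ _ _ (b j) y :=
              (b.sum_inner_mul_inner one y).symm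
          _ = @inner ℝ _ _ one (b i₀) * @inner ℝ _ _ (b i₀) y := by
              refine Finset.sum_eq_single i₀ (fun j _ hj => ?_)
                (fun h => absurd (Finset.mem_univ i₀) h)
              exact mul_eq_zero_of_left (by rw [real_inner_comm]; exact hd j hj) _
      have hne : @inner ℝ _ _ one (b i₀) ≠ 0 := by
        intro hzero
        have := hexp one
        rw [hzero, zero_mul, honeone] at this
        have : (n:ℝ) = 0 := this
        norm_num at this
        omega
      have := hexp x
      rw [hox] at this
      rcases mul_eq_zero.mp this.symm with h' | h'
      · exact absurd h' hne
      · exact h'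
    -- Rayleigh quotient bound
    have hray := rayleigh' A hL mu i₀ hge x hbi₀
    -- compute ⟪x, x⟫
    have hxx : @inner ℝ _ _ x x = s * ((n:ℝ) - s) * n := by
      rw [inner_eq_dot']
      have : (x : V → ℝ) ⬝ᵥ (x : V → ℝ) = ∑ v, x v * x v := rfl
      rw [this, ← Finset.sum_add_sum_compl S]
      have hA1 : ∑ v ∈ S, x v * x v = s * ((n:ℝ) - s)^2 := by
        have e1 : ∀ v ∈ S, x v * x v = ((n:ℝ) - s)^2 := by
          intro v hv; simp only [hx, if_pos hv]; ring
        rw [Finset.sum_congr rfl e1, Finset.sum_const, nsmul_eq_mul]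
      have hA2 : ∑ v ∈ Sᶜ, x v * x v = ((n:ℝ) - s) * s^2 := by
        have e1 : ∀ v ∈ Sᶜ, x v * x v = s^2 := by
          intro v hv; simp only [hx, if_neg (Finset.mem_compl.mp hv)]; ring
        rw [Finset.sum_congr rfl e1, Finset.sum_const, nsmul_eq_mul,
          Finset.card_compl, hcardV, Nat.cast_sub hsle]
      rw [hA1, hA2]; ring
    -- edge counting
    set E : ℕ := ∑ v ∈ S, (G.neighborFinset v \ S).card with hEdef
    have hdc : ∑ i ∈ Sᶜ, (G.neighborFinset i ∩ S).card = E := by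
      have h1 : ∀ i : V, (G.neighborFinset i ∩ S).card
          = ∑ j ∈ S, if G.Adj i j then 1 else 0 := by
        intro i
        have h : G.neighborFinset i ∩ S = S.filter (fun j => G.Adj i j) := by
          ext j
          simp [Finset.mem_inter, Finset.mem_filter, SimpleGraph.mem_neighborFinset, and_comm]
        rw [h, Finset.card_filter]
      have h2 : ∀ i : V, (G.neighborFinset i \ S).card
          = ∑ j ∈ Sᶜ, if G.Adj i j then 1 else 0 := by
        intro i
        have h : G.neighborFinset i \ S = Sᶜ.filter (fun j => G.Adj i j) := by
          ext j
          simp [Finset.mem_sdiff, Finset.mem_filter, Finset.mem_compl,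
            SimpleGraph.mem_neighborFinset, and_comm]
        rw [h, Finset.card_filter]
      rw [hEdef]
      simp_rw [h1, h2]
      rw [Finset.sum_comm]
      refine Finset.sum_congr rfl fun j _ => Finset.sum_congr rfl fun i _ => ?_
      simp [G.adj_comm]
    -- row computation for the quadratic form
    have hrow : ∀ i : V, (∑ j, if G.Adj i j then ((x : V → ℝ) i - x j)^2 else 0)
        = (n:ℝ)^2 * (if i ∈ S then ((G.neighborFinset i \ S).card : ℝ)
            else ((G.neighborFinset i ∩ S).card : ℝ)) := by
      intro i
      rw [← Finset.sum_filter]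
      have hN : Finset.univ.filter (fun j => G.Adj i j) = G.neighborFinset i := by
        ext j; simp [SimpleGraph.mem_neighborFinset]
      rw [hN, ← Finset.sum_inter_add_sum_sdiff (G.neighborFinset i) S]
      by_cases hi : i ∈ S
      · rw [if_pos hi]
        have e1 : ∀ j ∈ G.neighborFinset i ∩ S, ((x : V → ℝ) i - x j)^2 = 0 := by
          intro j hj
          have hjS : j ∈ S := (Finset.mem_inter.mp hj).2
          simp only [hx, if_pos hi, if_pos hjS]; ring
        have e2 : ∀ j ∈ G.neighborFinset i \ S, ((x : V → ℝ) i - x j)^2 = (n:ℝ)^2 := by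
          intro j hj
          have hjS : j ∉ S := (Finset.mem_sdiff.mp hj).2
          simp only [hx, if_pos hi, if_neg hjS]; ring
        rw [Finset.sum_congr rfl e1, Finset.sum_congr rfl e2, Finset.sum_const_zero,
          Finset.sum_const, nsmul_eq_mul, zero_add]
        ring
      · rw [if_neg hi]
        have e1 : ∀ j ∈ G.neighborFinset i ∩ S, ((x : V → ℝ) i - x j)^2 = (n:ℝ)^2 := by
          intro j hj
          have hjS : j ∈ S := (Finset.mem_inter.mp hj).2
          simp only [hx, if_neg hi, if_pos hjS]; ring
        have e2 : ∀ j ∈ G.neighborFinset i \ S, ((x : V → ℝ) i - x j)^2 = 0 := by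
          intro j hj
          have hjS : j ∉ S := (Finset.mem_sdiff.mp hj).2
          simp only [hx, if_neg hi, if_neg hjS]; ring
        rw [Finset.sum_congr rfl e1, Finset.sum_congr rfl e2, Finset.sum_const_zero,
          Finset.sum_const, nsmul_eq_mul, add_zero]
        ring
    -- the quadratic form equals n² E
    have hquad : (x : V → ℝ) ⬝ᵥ (A *ᵥ (x : V → ℝ)) = (n:ℝ)^2 * (E:ℝ) := by
      have h0 : (x : V → ℝ) ⬝ᵥ (A *ᵥ (x : V → ℝ))
          = Matrix.toLinearMap₂' ℝ A (x : V → ℝ) (x : V → ℝ) :=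
        (Matrix.toLinearMap₂'_apply' _ _ _).symm
      rw [h0, hA, SimpleGraph.lapMatrix_toLinearMap₂' ℝ (G := G) ((x : V → ℝ))]
      rw [Finset.sum_congr rfl (fun i _ => hrow i), ← Finset.mul_sum,
        ← Finset.sum_add_sum_compl S]
      have hsum1 : ∑ i ∈ S, (if i ∈ S then ((G.neighborFinset i \ S).card : ℝ)
          else ((G.neighborFinset i ∩ S).card : ℝ)) = (E:ℝ) := by
        rw [Finset.sum_congr rfl (fun i hi => if_pos hi), hEdef, Nat.cast_sum]
      have hsum2 : ∑ i ∈ Sᶜ, (if i ∈ S then ((G.neighborFinset i \ S).card : ℝ)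
          else ((G.neighborFinset i ∩ S).card : ℝ)) = (E:ℝ) := by
        rw [Finset.sum_congr rfl (fun i hi => if_neg (Finset.mem_compl.mp hi)),
          ← Nat.cast_sum, hdc]
      rw [hsum1, hsum2]
      ring
    -- bound on E
    have hEle : E ≤ S.card * (D / 2) := by
      calc E ≤ ∑ _v ∈ S, D / 2 := by
            refine Finset.sum_le_sum fun v hv => ?_
            rw [Nat.le_div_iff_mul_le (by norm_num : 0 < 2)]
            have h1 := hdef v hv
            have h2 : (G.neighborFinset v \ S).card + (G.neighborFinset v ∩ S).card
                = (G.neighborFinset v).card := Finset.card_sdiff_add_card_inter _ _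
            have h3 : (G.neighborFinset v).card ≤ D := hD ▸ G.degree_le_maxDegree v
            omega
        _ = S.card * (D / 2) := by rw [Finset.sum_const, smul_eq_mul]
    -- combine
    have hEf : (E:ℝ) ≤ s * f := by
      rw [hsdef, hfdef]
      exact_mod_cast hEle
    have hchain : mu * (s * ((n:ℝ) - s) * n) ≤ (n:ℝ)^2 * (s * f) := by
      calc mu * (s * ((n:ℝ) - s) * n) = mu * @inner ℝ _ _ x x := by rw [hxx]
        _ ≤ (x : V → ℝ) ⬝ᵥ (A *ᵥ (x : V → ℝ)) := hray
        _ = (n:ℝ)^2 * (E:ℝ) := hquad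
        _ ≤ (n:ℝ)^2 * (s * f) := by nlinarith [sq_nonneg (n:ℝ)]
    nlinarith [hchain, mul_pos hspos hnpos]
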